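/- Let n ≥ 1, let x = (x_1, …, x_n) ∈ ℝ^n with x_1 ≥ x_2 ≥ … ≥ x_n ≥ 0, Σ_{i=1}^n x_i² = 1 and (if n ≥ 2) x_1 + x_2 ≤ 1, and let ε_1, …, ε_n be independent random variables with Pr(ε_i = 1) = Pr(ε_i = −1) = 1/2. Then Pr(|Σ_{i=1}^n ε_i x_i| ≤ 1) ≥ 9/25 = 0.36. -/

import Mathlib

open Classical Finset

noncomputable def sgn (b : Bool) : ℝ := if b then 1 else -1

noncomputable def prSign (n : ℕ) (P : (Fin n → Bool) → Prop) : ℝ :=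
  ((Finset.univ.filter P).card : ℝ) / 2 ^ n

namespace Stmt19

noncomputable def Ssum {m : ℕ} (y : Fin m → ℝ) (σ : Fin m → Bool) : ℝ :=
  ∑ i, sgn (σ i) * y i

noncomputable def cnt (m : ℕ) (P : (Fin m → Bool) → Prop) : ℝ :=
  ∑ σ : Fin m → Bool, if P σ then 1 else 0

lemma sgn_sq (b : Bool) : sgn b ^ 2 = 1 := by cases b <;> simp [sgn]

lemma abs_sgn (b : Bool) : |sgn b| = 1 := by cases b <;> simp [sgn]

lemma sgn_not (b : Bool) : sgn (!b) = - sgn b := by cases b <;> simp [sgn]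

/-- the flip equivalence -/
def negEquiv (m : ℕ) : (Fin m → Bool) ≃ (Fin m → Bool) where
  toFun σ i := !(σ i)
  invFun σ i := !(σ i)
  left_inv σ := funext fun i => Bool.not_not _
  right_inv σ := funext fun i => Bool.not_not _

lemma Ssum_flip {m : ℕ} (y : Fin m → ℝ) (σ : Fin m → Bool) :
    Ssum y (fun i => !(σ i)) = - Ssum y σ := by
  unfold Ssum
  rw [← Finset.sum_neg_distrib]
  exact Finset.sum_congr rfl fun i _ => by rw [sgn_not]; ring

lemma cnt_nonneg (m : ℕ) (P : (Fin m → Bool) → Prop) : 0 ≤ cnt m P := by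
  unfold cnt
  apply Finset.sum_nonneg
  intro σ _
  by_cases h : P σ <;> simp [h]

lemma cnt_congr (m : ℕ) (P Q : (Fin m → Bool) → Prop) (h : ∀ σ, P σ ↔ Q σ) :
    cnt m P = cnt m Q := by
  unfold cnt
  exact Finset.sum_congr rfl fun σ _ => by
    by_cases hp : P σ
    · rw [if_pos hp, if_pos ((h σ).1 hp)]
    · rw [if_neg hp, if_neg (fun hq => hp ((h σ).2 hq))]

lemma cnt_mono (m : ℕ) (P Q : (Fin m → Bool) → Prop) (h : ∀ σ, P σ → Q σ) :
    cnt m P ≤ cnt m Q := by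
  unfold cnt
  apply Finset.sum_le_sum
  intro σ _
  by_cases hp : P σ
  · rw [if_pos hp, if_pos (h σ hp)]
  · rw [if_neg hp]; by_cases hq : Q σ <;> simp [hq]

lemma cnt_union (m : ℕ) (P Q R : (Fin m → Bool) → Prop) (h : ∀ σ, R σ → P σ ∨ Q σ) :
    cnt m R ≤ cnt m P + cnt m Q := by
  unfold cnt
  rw [← Finset.sum_add_distrib]
  apply Finset.sum_le_sum
  intro σ _
  by_cases hr : R σ
  · rcases h σ hr with hp | hq
    · rw [if_pos hp]
      have : (0:ℝ) ≤ if Q σ then 1 else 0 := by by_cases h' : Q σ <;> simp [h']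
      rw [if_pos hr]; linarith
    · rw [if_pos hq]
      have : (0:ℝ) ≤ if P σ then 1 else 0 := by by_cases h' : P σ <;> simp [h']
      rw [if_pos hr]; linarith
  · rw [if_neg hr]
    have h1 : (0:ℝ) ≤ if P σ then 1 else 0 := by by_cases h' : P σ <;> simp [h']
    have h2 : (0:ℝ) ≤ if Q σ then 1 else 0 := by by_cases h' : Q σ <;> simp [h']
    linarith

lemma card_cube (m : ℕ) : ∑ _σ : Fin m → Bool, (1:ℝ) = 2 ^ m := by
  rw [Finset.sum_const, Finset.card_univ]
  simp [Fintype.card_fun]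

lemma cnt_le_total (m : ℕ) (P : (Fin m → Bool) → Prop) : cnt m P ≤ 2 ^ m := by
  rw [← card_cube m]
  unfold cnt
  apply Finset.sum_le_sum
  intro σ _
  by_cases h : P σ <;> simp [h]

lemma sum_split (m : ℕ) (F : (Fin (m+1) → Bool) → ℝ) :
    ∑ σ, F σ = (∑ ρ : Fin m → Bool, F (Fin.cons true ρ)) + (∑ ρ : Fin m → Bool, F (Fin.cons false ρ)) := by
  rw [← Fintype.sum_equiv (Fin.consEquiv (fun _ : Fin (m+1) => Bool))
      (fun p => F (Fin.cons p.1 p.2)) F (fun p => rfl)]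
  rw [Fintype.sum_prod_type, Fintype.sum_bool]

lemma cnt_split (m : ℕ) (P : (Fin (m+1) → Bool) → Prop) :
    cnt (m+1) P = cnt m (fun ρ => P (Fin.cons true ρ)) + cnt m (fun ρ => P (Fin.cons false ρ)) := by
  unfold cnt
  exact sum_split m _

lemma Ssum_cons (m : ℕ) (y : Fin (m+1) → ℝ) (b : Bool) (ρ : Fin m → Bool) :
    Ssum y (Fin.cons b ρ) = sgn b * y 0 + Ssum (fun i => y i.succ) ρ := by
  unfold Ssum
  rw [Fin.sum_univ_succ]
  simp [Fin.cons_zero, Fin.cons_succ]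

lemma cnt_neg (m : ℕ) (y : Fin m → ℝ) (Q : ℝ → Prop) :
    cnt m (fun σ => Q (Ssum y σ)) = cnt m (fun σ => Q (- Ssum y σ)) := by
  unfold cnt
  apply Fintype.sum_equiv (negEquiv m)
  intro σ
  show (if Q (Ssum y σ) then (1:ℝ) else 0) = if Q (- Ssum y (fun i => !(σ i))) then (1:ℝ) else 0
  rw [Ssum_flip y σ, neg_neg]

lemma sum_Ssum_zero (m : ℕ) (y : Fin m → ℝ) : ∑ σ, Ssum y σ = 0 := by
  have h : ∑ σ, Ssum y σ = ∑ σ, - Ssum y σ := by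
    apply Fintype.sum_equiv (negEquiv m)
    intro σ
    show Ssum y σ = - Ssum y (fun i => !(σ i))
    rw [Ssum_flip y σ, neg_neg]
  rw [Finset.sum_neg_distrib] at h
  linarith


lemma sum_Ssum_sq (m : ℕ) (y : Fin m → ℝ) :
    ∑ σ, (Ssum y σ) ^ 2 = 2 ^ m * ∑ i, (y i) ^ 2 := by
  induction m with
  | zero =>
    have h : ∀ σ : Fin 0 → Bool, Ssum y σ = 0 := by
      intro σ; unfold Ssum; simp
    simp [h]
  | succ m IH =>
    rw [sum_split]
    have key : ∀ b : Bool, ∑ ρ : Fin m → Bool, (Ssum y (Fin.cons b ρ)) ^ 2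
        = 2 ^ m * ((y 0) ^ 2 + ∑ i : Fin m, (y i.succ) ^ 2) := by
      intro b
      have hpt : ∀ ρ : Fin m → Bool, (Ssum y (Fin.cons b ρ)) ^ 2
          = (y 0) ^ 2 + (2 * sgn b * y 0) * Ssum (fun i => y i.succ) ρ
            + (Ssum (fun i => y i.succ) ρ) ^ 2 := by
        intro ρ
        rw [Ssum_cons]
        have h := sgn_sq b
        linear_combination (y 0 ^ 2) * h
      calc ∑ ρ : Fin m → Bool, (Ssum y (Fin.cons b ρ)) ^ 2
          = ∑ ρ : Fin m → Bool, ((y 0) ^ 2 + (2 * sgn b * y 0) * Ssum (fun i => y i.succ) ρ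
            + (Ssum (fun i => y i.succ) ρ) ^ 2) := Finset.sum_congr rfl fun ρ _ => hpt ρ
        _ = (∑ _ρ : Fin m → Bool, (y 0) ^ 2)
            + (2 * sgn b * y 0) * (∑ ρ : Fin m → Bool, Ssum (fun i => y i.succ) ρ)
            + ∑ ρ : Fin m → Bool, (Ssum (fun i => y i.succ) ρ) ^ 2 := by
            rw [Finset.sum_add_distrib, Finset.sum_add_distrib, Finset.mul_sum]
        _ = 2 ^ m * (y 0) ^ 2 + 0 + 2 ^ m * ∑ i : Fin m, (y i.succ) ^ 2 := by
            rw [sum_Ssum_zero, IH (fun i => y i.succ), Finset.sum_const, Finset.card_univ]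
            simp [Fintype.card_fun]
        _ = 2 ^ m * ((y 0) ^ 2 + ∑ i : Fin m, (y i.succ) ^ 2) := by ring
    rw [key true, key false, Fin.sum_univ_succ (fun i => (y i) ^ 2)]
    ring

lemma cheb (m : ℕ) (y : Fin m → ℝ) (z : ℝ) (hz : 0 < z) :
    cnt m (fun σ => z ≤ |Ssum y σ|) ≤ 2 ^ m * (∑ i, (y i) ^ 2) / z ^ 2 := by
  rw [le_div_iff₀ (by positivity)]
  have h : ∀ σ : Fin m → Bool,
      (if z ≤ |Ssum y σ| then (1:ℝ) else 0) * z ^ 2 ≤ (Ssum y σ) ^ 2 := by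
    intro σ
    by_cases h : z ≤ |Ssum y σ|
    · rw [if_pos h, one_mul]
      nlinarith [sq_abs (Ssum y σ), abs_nonneg (Ssum y σ)]
    · rw [if_neg h, zero_mul]; positivity
  calc cnt m (fun σ => z ≤ |Ssum y σ|) * z ^ 2
      = ∑ σ : Fin m → Bool, (if z ≤ |Ssum y σ| then (1:ℝ) else 0) * z ^ 2 := by
        unfold cnt; rw [Finset.sum_mul]
    _ ≤ ∑ σ : Fin m → Bool, (Ssum y σ) ^ 2 := Finset.sum_le_sum fun σ _ => h σ
    _ = 2 ^ m * ∑ i, (y i) ^ 2 := sum_Ssum_sq m y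

lemma half (m : ℕ) (y : Fin m → ℝ) (u : ℝ) (hu : 0 ≤ u) :
    (2:ℝ) ^ m / 2 ≤ cnt m (fun σ => Ssum y σ ≤ u) := by
  have hsym : cnt m (fun σ => (- u) ≤ Ssum y σ) = cnt m (fun σ => Ssum y σ ≤ u) := by
    have h := cnt_neg m y (fun r => (-u) ≤ r)
    rw [h]
    apply cnt_congr
    intro σ
    constructor <;> intro h' <;> linarith
  have hcover : (2:ℝ) ^ m ≤ cnt m (fun σ => Ssum y σ ≤ u) + cnt m (fun σ => (-u) ≤ Ssum y σ) := by
    rw [← card_cube m]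
    unfold cnt
    rw [← Finset.sum_add_distrib]
    apply Finset.sum_le_sum
    intro σ _
    by_cases h : Ssum y σ ≤ u
    · have h2 : (0:ℝ) ≤ if (-u) ≤ Ssum y σ then 1 else 0 := by
        by_cases h' : (-u) ≤ Ssum y σ <;> simp [h']
      rw [if_pos h]; linarith
    · push_neg at h
      have h' : (-u) ≤ Ssum y σ := by linarith
      have h2 : (0:ℝ) ≤ if Ssum y σ ≤ u then 1 else 0 := by
        by_cases h'' : Ssum y σ ≤ u <;> simp [h'']
      rw [if_pos h']; linarith
  linarith

lemma tail_bound (m : ℕ) (y : Fin m → ℝ) (z : ℝ) (hz : 0 < z) :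
    cnt m (fun σ => Ssum y σ ≤ -z) ≤ 2 ^ m * (∑ i, (y i) ^ 2) / (2 * z ^ 2) := by
  have hsym : cnt m (fun σ => Ssum y σ ≤ -z) = cnt m (fun σ => z ≤ Ssum y σ) := by
    have h := cnt_neg m y (fun r => r ≤ -z)
    rw [h]
    apply cnt_congr
    intro σ
    constructor <;> intro h' <;> linarith
  have hun : cnt m (fun σ => Ssum y σ ≤ -z) + cnt m (fun σ => z ≤ Ssum y σ)
      ≤ cnt m (fun σ => z ≤ |Ssum y σ|) := by
    unfold cnt
    rw [← Finset.sum_add_distrib]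
    apply Finset.sum_le_sum
    intro σ _
    by_cases h1 : Ssum y σ ≤ -z
    · have h2 : ¬ (z ≤ Ssum y σ) := by push_neg; linarith
      have h3 : z ≤ |Ssum y σ| := le_abs.mpr (Or.inr (by linarith))
      rw [if_pos h1, if_neg h2, if_pos h3]; norm_num
    · by_cases h2 : z ≤ Ssum y σ
      · have h3 : z ≤ |Ssum y σ| := le_abs.mpr (Or.inl h2)
        rw [if_neg h1, if_pos h2, if_pos h3]; norm_num
      · rw [if_neg h1, if_neg h2]
        have h3 : (0:ℝ) ≤ if z ≤ |Ssum y σ| then 1 else 0 := by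
          by_cases h' : z ≤ |Ssum y σ| <;> simp [h']
        linarith
  have hch := cheb m y z hz
  rw [hsym] at hun ⊢
  have : cnt m (fun σ => z ≤ Ssum y σ) + cnt m (fun σ => z ≤ Ssum y σ)
      ≤ 2 ^ m * (∑ i, (y i) ^ 2) / z ^ 2 := le_trans hun hch
  have he : 2 ^ m * (∑ i, (y i) ^ 2) / (2 * z ^ 2) = (2 ^ m * (∑ i, (y i) ^ 2) / z ^ 2) / 2 := by
    rw [div_div, mul_comm (z ^ 2) 2]
  rw [he]
  linarith

lemma window (m : ℕ) (y : Fin m → ℝ) (z : ℝ) (hz : 0 < z) :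
    (1 - (∑ i, (y i) ^ 2) / z ^ 2) * 2 ^ m ≤ cnt m (fun σ => |Ssum y σ| ≤ z) := by
  have hcover : (2:ℝ) ^ m ≤ cnt m (fun σ => |Ssum y σ| ≤ z) + cnt m (fun σ => z ≤ |Ssum y σ|) := by
    rw [← card_cube m]
    unfold cnt
    rw [← Finset.sum_add_distrib]
    apply Finset.sum_le_sum
    intro σ _
    by_cases h : |Ssum y σ| ≤ z
    · have h2 : (0:ℝ) ≤ if z ≤ |Ssum y σ| then 1 else 0 := by
        by_cases h' : z ≤ |Ssum y σ| <;> simp [h']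
      rw [if_pos h]; linarith
    · push_neg at h
      have h2 : (0:ℝ) ≤ if |Ssum y σ| ≤ z then 1 else 0 := by
        by_cases h' : |Ssum y σ| ≤ z <;> simp [h']
      rw [if_pos h.le]; linarith
  have hch := cheb m y z hz
  have he : (1 - (∑ i, (y i) ^ 2) / z ^ 2) * 2 ^ m
      = 2 ^ m - 2 ^ m * (∑ i, (y i) ^ 2) / z ^ 2 := by ring
  rw [he]
  linarith

lemma term (m : ℕ) (y : Fin m → ℝ) (u μ : ℝ) (hu : 0 ≤ u) (huμ : u ≤ μ) (hμ : 0 < μ) :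
    (1/2 - (∑ i, (y i) ^ 2) / (2 * (μ + u) ^ 2)) * 2 ^ m
      ≤ cnt m (fun σ => |u + Ssum y σ| ≤ μ) := by
  have hA := half m y (μ - u) (by linarith)
  have hB := tail_bound m y (μ + u) (by linarith)
  have hsub : cnt m (fun σ => Ssum y σ ≤ μ - u)
      ≤ cnt m (fun σ => |u + Ssum y σ| ≤ μ) + cnt m (fun σ => Ssum y σ ≤ -(μ + u)) := by
    apply cnt_union
    intro σ hσ
    by_cases h : Ssum y σ ≤ -(μ + u)
    · exact Or.inr h
    · push_neg at h
      exact Or.inl (abs_le.mpr ⟨by linarith, by linarith⟩)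
  have hG := cnt_nonneg m (fun σ => |u + Ssum y σ| ≤ μ)
  have he : (1/2 - (∑ i, (y i) ^ 2) / (2 * (μ + u) ^ 2)) * 2 ^ m
      = 2 ^ m / 2 - 2 ^ m * (∑ i, (y i) ^ 2) / (2 * (μ + u) ^ 2) := by ring
  rw [he]
  linarith

lemma cnt_shift_abs (m : ℕ) (y : Fin m → ℝ) (t μ : ℝ) :
    cnt m (fun σ => |t + Ssum y σ| ≤ μ) = cnt m (fun σ => |(|t|) + Ssum y σ| ≤ μ) := by
  rcases le_or_gt 0 t with h | h
  · rw [abs_of_nonneg h]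
  · rw [abs_of_neg h]
    have h2 := cnt_neg m y (fun r => |t + r| ≤ μ)
    rw [h2]
    apply cnt_congr
    intro σ
    have he : |t + - Ssum y σ| = |(-t) + Ssum y σ| := by
      rw [← abs_neg]; ring_nf
    rw [he]


lemma sum_sq_tail (m : ℕ) (y : Fin (m+1) → ℝ) :
    ∑ i : Fin m, (y i.succ) ^ 2 ≤ ∑ i, (y i) ^ 2 := by
  rw [Fin.sum_univ_succ (fun i => (y i) ^ 2)]
  nlinarith [sq_nonneg (y 0)]

lemma cnt_cons_eq (m : ℕ) (y : Fin (m+1) → ℝ) (b : Bool) (t μ : ℝ) :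
    cnt m (fun ρ => |t + Ssum y (Fin.cons b ρ)| ≤ μ)
      = cnt m (fun ρ => |(t + sgn b * y 0) + Ssum (fun i => y i.succ) ρ| ≤ μ) := by
  apply cnt_congr
  intro ρ
  rw [Ssum_cons]
  constructor <;> intro h <;> [skip; skip] <;>
    · have he : t + (sgn b * y 0 + Ssum (fun i => y i.succ) ρ)
          = (t + sgn b * y 0) + Ssum (fun i => y i.succ) ρ := by ring
      first
        | (rwa [he] at h) | (rwa [he])

lemma W2 (μ c Wv : ℝ) (hμ : 0 < μ) (hc : 0 ≤ c) (hcμ : c ≤ μ) (hWv : 0 ≤ Wv) :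
    ∀ m (y : Fin m → ℝ) (t : ℝ), (∀ i, 0 ≤ y i) → (∀ i, y i ≤ c) →
      ((∑ i, (y i) ^ 2) ≤ Wv) → |t| ≤ μ - c →
      (1/2 - Wv / (2 * (2 * μ - c) ^ 2)) * 2 ^ m ≤ cnt m (fun σ => |t + Ssum y σ| ≤ μ) := by
  intro m
  induction m with
  | zero =>
    intro y t _ _ _ ht
    have hone : cnt 0 (fun σ => |t + Ssum y σ| ≤ μ) = 1 := by
      unfold cnt
      rw [Fintype.sum_unique]
      rw [if_pos]
      show |t + Ssum y default| ≤ μ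
      have h0 : Ssum y (default : Fin 0 → Bool) = 0 := by unfold Ssum; simp
      rw [h0, add_zero]
      linarith
    rw [hone]
    have h1 : 0 < 2 * μ - c := by linarith
    have h2 : 0 ≤ Wv / (2 * (2 * μ - c) ^ 2) := by positivity
    nlinarith
  | succ m IH =>
    intro y t hy0 hyc hyW ht
    have habs : ∀ b : Bool, |t + sgn b * y 0| ≤ μ := by
      intro b
      have h1 : |t + sgn b * y 0| ≤ |t| + |sgn b * y 0| := abs_add_le _ _
      have h2 : |sgn b * y 0| = y 0 := by
        rw [abs_mul, abs_sgn, one_mul, abs_of_nonneg (hy0 0)]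
      have h3 := hyc 0
      rw [h2] at h1
      linarith
    have hbr : ∀ b : Bool,
        (1/2 - Wv / (2 * (2 * μ - c) ^ 2)) * 2 ^ m
          ≤ cnt m (fun ρ => |t + Ssum y (Fin.cons b ρ)| ≤ μ) := by
      intro b
      rw [cnt_cons_eq]
      set t' := t + sgn b * y 0 with ht'
      set y' := fun i : Fin m => y i.succ with hy'
      have hWtail : (∑ i, (y' i) ^ 2) ≤ Wv := le_trans (sum_sq_tail m y) hyW
      by_cases hpre : |t'| ≤ μ - c
      · exact IH y' t' (fun i => hy0 i.succ) (fun i => hyc i.succ) hWtail hpre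
      · push_neg at hpre
        rw [cnt_shift_abs]
        have hterm := term m y' |t'| μ (abs_nonneg t') (habs b) hμ
        have hle : (1/2 - Wv / (2 * (2 * μ - c) ^ 2))
            ≤ (1/2 - (∑ i, (y' i) ^ 2) / (2 * (μ + |t'|) ^ 2)) := by
          have h1 : 0 < 2 * μ - c := by linarith
          have h2 : (2 * μ - c) ^ 2 ≤ (μ + |t'|) ^ 2 := by
            apply pow_le_pow_left₀ (le_of_lt h1)
            linarith
          have h3 : (∑ i, (y' i) ^ 2) / (2 * (μ + |t'|) ^ 2) ≤ Wv / (2 * (2 * μ - c) ^ 2) := by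
            apply div_le_div₀ hWv hWtail (by positivity)
            linarith
          linarith
        calc (1/2 - Wv / (2 * (2 * μ - c) ^ 2)) * 2 ^ m
            ≤ (1/2 - (∑ i, (y' i) ^ 2) / (2 * (μ + |t'|) ^ 2)) * 2 ^ m := by
              apply mul_le_mul_of_nonneg_right hle (by positivity)
          _ ≤ cnt m (fun σ => |(|t'|) + Ssum y' σ| ≤ μ) := hterm
    rw [cnt_split]
    have h1 := hbr true
    have h2 := hbr false
    have he : (1/2 - Wv / (2 * (2 * μ - c) ^ 2)) * 2 ^ (m+1)
        = (1/2 - Wv / (2 * (2 * μ - c) ^ 2)) * 2 ^ m + (1/2 - Wv / (2 * (2 * μ - c) ^ 2)) * 2 ^ m := by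
      ring
    rw [he]
    exact add_le_add h1 h2

lemma W1 (c : ℝ) (hc : 0 ≤ c) (hc3 : c ≤ 1/3) :
    ∀ m (y : Fin m → ℝ) (t : ℝ),
      (∀ i, 0 ≤ y i) → (∀ i j : Fin m, i ≤ j → y j ≤ y i) → (∀ i, y i ≤ c) →
      |t| ≤ 1 → (∀ i, |t| + y i ≤ 1) → (∀ i, (∑ j, (y j) ^ 2) + |t| * y i ≤ 1) →
      (9/25) * 2 ^ m ≤ cnt m (fun σ => |t + Ssum y σ| ≤ 1) := by
  intro m
  induction m with
  | zero =>
    intro y t _ _ _ ht1 _ _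
    have hone : cnt 0 (fun σ => |t + Ssum y σ| ≤ 1) = 1 := by
      unfold cnt
      rw [Fintype.sum_unique]
      rw [if_pos]
      show |t + Ssum y default| ≤ 1
      have h0 : Ssum y (default : Fin 0 → Bool) = 0 := by unfold Ssum; simp
      rw [h0, add_zero]
      exact ht1
    rw [hone]
    norm_num
  | succ m IH =>
    intro y t hy0 hymono hyc ht1 ht hV
    have habs : ∀ b : Bool, |t + sgn b * y 0| ≤ 1 := by
      intro b
      have h1 : |t + sgn b * y 0| ≤ |t| + |sgn b * y 0| := abs_add_le _ _
      have h2 : |sgn b * y 0| = y 0 := by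
        rw [abs_mul, abs_sgn, one_mul, abs_of_nonneg (hy0 0)]
      have h3 := ht 0
      rw [h2] at h1
      linarith
    have hbr : ∀ b : Bool,
        (9/25) * 2 ^ m ≤ cnt m (fun ρ => |t + Ssum y (Fin.cons b ρ)| ≤ 1) := by
      intro b
      rw [cnt_cons_eq]
      set t' := t + sgn b * y 0 with ht'def
      set y' := fun i : Fin m => y i.succ with hy'def
      have ht'abs : |t'| ≤ |t| + y 0 := by
        have h1 : |t + sgn b * y 0| ≤ |t| + |sgn b * y 0| := abs_add_le _ _
        have h2 : |sgn b * y 0| = y 0 := by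
          rw [abs_mul, abs_sgn, one_mul, abs_of_nonneg (hy0 0)]
        rw [h2] at h1
        exact h1
      have ht'1 : |t'| ≤ 1 := habs b
      -- the propagated variance invariant
      have hVprop : ∀ i : Fin m, (∑ j, (y' j) ^ 2) + |t'| * y' i ≤ 1 := by
        intro i
        have h1 : ∑ j, (y' j) ^ 2 = (∑ j, (y j) ^ 2) - (y 0) ^ 2 := by
          rw [Fin.sum_univ_succ (fun j => (y j) ^ 2)]
          ring
        have h2 : y' i ≤ y 0 := hymono 0 i.succ (Fin.zero_le _)
        have h3 : |t'| * y' i ≤ (|t| + y 0) * y' i :=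
          mul_le_mul_of_nonneg_right ht'abs (hy0 i.succ)
        have h4 : (|t| + y 0) * y' i = |t| * y' i + y 0 * y' i := by ring
        have h5 : y 0 * y' i ≤ (y 0) ^ 2 := by
          have := mul_le_mul_of_nonneg_left h2 (hy0 0)
          nlinarith
        have h6 := hV i.succ
        rw [h1]
        have h7 : |t| * y' i = |t| * y i.succ := rfl
        nlinarith
      by_cases hpre : ∀ i : Fin m, |t'| + y' i ≤ 1
      · exact IH y' t' (fun i => hy0 i.succ)
          (fun i j hij => hymono i.succ j.succ (Fin.succ_le_succ_iff.mpr hij))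
          (fun i => hyc i.succ) ht'1 hpre hVprop
      · push_neg at hpre
        obtain ⟨i0, hi0⟩ := hpre
        set e := y' i0 with hedef
        have he0 : 0 ≤ e := hy0 i0.succ
        have hec : e ≤ c := hyc i0.succ
        have hstop : 1 - e < |t'| := by linarith
        have hVe : (∑ j, (y' j) ^ 2) + |t'| * e ≤ 1 := hVprop i0
        rw [cnt_shift_abs]
        have hterm := term m y' |t'| 1 (abs_nonneg t') ht'1 one_pos
        have hV'0 : 0 ≤ ∑ j, (y' j) ^ 2 := by positivity
        have hkey : (9/25 : ℝ) ≤ 1/2 - (∑ j, (y' j) ^ 2) / (2 * (1 + |t'|) ^ 2) := by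
          have h1 : (∑ j, (y' j) ^ 2) ≤ 1 - (1 - e) * e := by nlinarith
          have h2 : (0:ℝ) < 2 - e := by linarith
          have h3 : (2 - e) ^ 2 ≤ (1 + |t'|) ^ 2 := by
            apply pow_le_pow_left₀ (le_of_lt h2)
            linarith
          have h4 : (∑ j, (y' j) ^ 2) / (2 * (1 + |t'|) ^ 2)
              ≤ (1 - (1 - e) * e) / (2 * (2 - e) ^ 2) := by
            apply div_le_div₀ (by nlinarith) h1 (by positivity)
            linarith
          have h5 : (1 - (1 - e) * e) / (2 * (2 - e) ^ 2) ≤ 7/50 := by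
            rw [div_le_iff₀ (by positivity)]
            nlinarith [mul_nonneg (by linarith : (0:ℝ) ≤ 1 - 3 * e) (by linarith : (0:ℝ) ≤ 1 + 2 * e)]
          linarith
        calc (9/25 : ℝ) * 2 ^ m
            ≤ (1/2 - (∑ j, (y' j) ^ 2) / (2 * (1 + |t'|) ^ 2)) * 2 ^ m := by
              apply mul_le_mul_of_nonneg_right hkey (by positivity)
          _ ≤ cnt m (fun σ => |(|t'|) + Ssum y' σ| ≤ 1) := hterm
    rw [cnt_split]
    have he : (9/25 : ℝ) * 2 ^ (m+1) = (9/25) * 2 ^ m + (9/25) * 2 ^ m := by ring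
    rw [he]
    exact add_le_add (hbr true) (hbr false)


lemma caseC_poly (a b : ℝ) (h1 : 1/3 ≤ b) (h2 : b ≤ a) (h3 : a ≤ 9/16) (h4 : a + b ≤ 1) :
    (1 - a^2 - b^2) * (2 * (2 - b)^2) + (1 - a^2 - b^2) * (2 * (1 + (a + b))^2)
      ≤ 7/25 * ((2 * (1 + (a + b))^2) * (2 * (2 - b)^2)) := by
  nlinarith [sq_nonneg (a-b), sq_nonneg (b-1/3), sq_nonneg (a-1/3), sq_nonneg (a+b-2/3),
    mul_nonneg (sub_nonneg.2 h2) (by linarith : (0:ℝ) ≤ b - 1/3),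
    mul_nonneg (by linarith : (0:ℝ) ≤ a - 1/3) (by linarith : (0:ℝ) ≤ b - 1/3),
    mul_nonneg (by linarith : (0:ℝ) ≤ 1 - a - b) (by linarith : (0:ℝ) ≤ b - 1/3),
    mul_nonneg (by linarith : (0:ℝ) ≤ 1 - a - b) (by linarith : (0:ℝ) ≤ a - 1/3),
    mul_nonneg (by linarith : (0:ℝ) ≤ 9/16 - a) (by linarith : (0:ℝ) ≤ b - 1/3),
    sq_nonneg (1-a-b),
    mul_nonneg (mul_nonneg (by linarith : (0:ℝ) ≤ a - 1/3) (by linarith : (0:ℝ) ≤ b - 1/3)) (by linarith : (0:ℝ) ≤ 1 - a - b)]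

lemma final_conv (n : ℕ) (P : (Fin n → Bool) → Prop)
    (h : (9/25 : ℝ) * 2 ^ n ≤ cnt n P) : prSign n P ≥ 9 / 25 := by
  unfold prSign
  rw [ge_iff_le, le_div_iff₀ (by positivity)]
  have he : ((Finset.univ.filter P).card : ℝ) = cnt n P := by
    unfold cnt
    rw [Finset.sum_boole]
  rw [he]
  linarith

end Stmt19

set_option maxHeartbeats 1000000 in
theorem stmt19 (n : ℕ) (hn : 1 ≤ n) (x : Fin n → ℝ)
    (hmono : ∀ i j : Fin n, i ≤ j → x j ≤ x i)
    (hnonneg : ∀ i, 0 ≤ x i)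
    (hx : ∑ i, (x i) ^ 2 = 1)
    (h12 : ∀ h2 : 2 ≤ n, x ⟨0, by omega⟩ + x ⟨1, by omega⟩ ≤ 1) :
    prSign n (fun σ => |∑ i, sgn (σ i) * x i| ≤ 1) ≥ 9 / 25 := by
  apply Stmt19.final_conv
  show (9/25 : ℝ) * 2 ^ n ≤ Stmt19.cnt n (fun σ => |Stmt19.Ssum x σ| ≤ 1)
  rcases Nat.lt_or_ge n 2 with hn2 | hn2
  · -- n = 1
    have hn1 : n = 1 := by omega
    subst hn1
    have hx0 : x 0 = 1 := by
      have h := hx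
      rw [Fin.sum_univ_one] at h
      nlinarith [hnonneg 0]
    have hall : ∀ σ : Fin 1 → Bool, |Stmt19.Ssum x σ| ≤ 1 := by
      intro σ
      unfold Stmt19.Ssum
      rw [Fin.sum_univ_one, hx0, mul_one, Stmt19.abs_sgn]
    have he : Stmt19.cnt 1 (fun σ => |Stmt19.Ssum x σ| ≤ 1) = 2 ^ 1 := by
      unfold Stmt19.cnt
      rw [Finset.sum_congr rfl (fun σ _ => if_pos (hall σ))]
      exact Stmt19.card_cube 1
    rw [he]
    norm_num
  · obtain ⟨m, rfl⟩ : ∃ m, n = m + 2 := ⟨n - 2, by omega⟩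
    -- basic index facts
    have e0 : (⟨0, by omega⟩ : Fin (m+2)) = 0 := by ext; simp
    have e1 : (⟨1, by omega⟩ : Fin (m+2)) = 1 := by ext; simp [Fin.val_one]
    have h12' : x 0 + x 1 ≤ 1 := by
      have h := h12 (by omega)
      rwa [e0, e1] at h
    have h01 : (0 : Fin (m+2)) ≤ 1 := Fin.zero_le _
    have hba : x 1 ≤ x 0 := hmono 0 1 h01
    have ha0 : 0 ≤ x 0 := hnonneg 0
    have hb0 : 0 ≤ x 1 := hnonneg 1
    set y1 : Fin (m+1) → ℝ := fun i => x i.succ with hy1def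
    set z2 : Fin m → ℝ := fun i => x i.succ.succ with hz2def
    have hxs1 : x 0 ^ 2 + ∑ i : Fin (m+1), (y1 i) ^ 2 = 1 := by
      rw [← hx, Fin.sum_univ_succ (fun i => (x i) ^ 2)]
    have hy10 : y1 0 = x 1 := by
      show x (0 : Fin (m+1)).succ = x 1
      rw [Fin.succ_zero_eq_one]
    have hxs2 : ∑ i : Fin (m+1), (y1 i) ^ 2 = x 1 ^ 2 + ∑ i : Fin m, (z2 i) ^ 2 := by
      rw [Fin.sum_univ_succ (fun i : Fin (m+1) => (y1 i) ^ 2), hy10]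
    have hz2nn : 0 ≤ ∑ i : Fin m, (z2 i) ^ 2 := by positivity
    have ha1 : x 0 ≤ 1 := by nlinarith [sq_nonneg (x 1)]
    -- bounds on tail entries
    have hy1le : ∀ i : Fin (m+1), y1 i ≤ x 1 := by
      intro i
      apply hmono 1 i.succ
      rw [Fin.le_def, Fin.val_one, Fin.val_succ]
      omega
    have hy1nn : ∀ i : Fin (m+1), 0 ≤ y1 i := fun i => hnonneg _
    have hz2le : ∀ i : Fin m, z2 i ≤ x 1 := by
      intro i
      apply hmono 1 i.succ.succ
      rw [Fin.le_def, Fin.val_one, Fin.val_succ, Fin.val_succ]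
      omega
    have hz2nn' : ∀ i : Fin m, 0 ≤ z2 i := fun i => hnonneg _
    -- split the first coordinate
    rw [Stmt19.cnt_split]
    have hbrfix : ∀ b : Bool,
        Stmt19.cnt (m+1) (fun ρ => |Stmt19.Ssum x (Fin.cons b ρ)| ≤ 1)
          = Stmt19.cnt (m+1) (fun ρ => |sgn b * x 0 + Stmt19.Ssum y1 ρ| ≤ 1) := by
      intro b
      apply Stmt19.cnt_congr
      intro ρ
      rw [Stmt19.Ssum_cons]
    rw [hbrfix true, hbrfix false]
    rcases le_or_gt (9/16 : ℝ) (x 0) with hA | hA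
    · -- CASE A : large x 0
      have hcov : Stmt19.cnt (m+1) (fun ρ => |Stmt19.Ssum y1 ρ| ≤ 1 + x 0)
          ≤ Stmt19.cnt (m+1) (fun ρ => |sgn true * x 0 + Stmt19.Ssum y1 ρ| ≤ 1)
            + Stmt19.cnt (m+1) (fun ρ => |sgn false * x 0 + Stmt19.Ssum y1 ρ| ≤ 1) := by
        apply Stmt19.cnt_union
        intro ρ hρ
        have hsgnt : sgn true = 1 := by simp [sgn]
        have hsgnf : sgn false = -1 := by simp [sgn]
        rw [abs_le] at hρ
        rcases le_or_gt 0 (Stmt19.Ssum y1 ρ) with hr | hr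
        · right
          rw [hsgnf, abs_le]
          constructor <;> nlinarith
        · left
          rw [hsgnt, abs_le]
          constructor <;> nlinarith
      have hwin := Stmt19.window (m+1) y1 (1 + x 0) (by linarith)
      have hVle : (∑ i : Fin (m+1), (y1 i) ^ 2) / (1 + x 0) ^ 2 ≤ 7/25 := by
        rw [div_le_iff₀ (by positivity)]
        nlinarith
      have hstep : (9/25 : ℝ) * 2 ^ (m+2) ≤ (1 - (∑ i : Fin (m+1), (y1 i) ^ 2) / (1 + x 0) ^ 2) * 2 ^ (m+1) := by
        have h1 : (9/25 : ℝ) * 2 ^ (m+2) = (18/25) * 2 ^ (m+1) := by ring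
        rw [h1]
        apply mul_le_mul_of_nonneg_right (by linarith) (by positivity)
      linarith
    · rcases le_or_gt (x 1) (1/3 : ℝ) with hB | hB
      · -- CASE B : small x 1, adaptive stopped walk
        have hbr : ∀ b : Bool,
            (9/25 : ℝ) * 2 ^ (m+1)
              ≤ Stmt19.cnt (m+1) (fun ρ => |sgn b * x 0 + Stmt19.Ssum y1 ρ| ≤ 1) := by
          intro b
          have habs : |sgn b * x 0| = x 0 := by
            rw [abs_mul, Stmt19.abs_sgn, one_mul, abs_of_nonneg ha0]
          apply Stmt19.W1 (x 1) hb0 hB (m+1) y1 (sgn b * x 0)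
            hy1nn
            (fun i j hij => hmono i.succ j.succ (by
              rw [Fin.le_def, Fin.val_succ, Fin.val_succ]
              rw [Fin.le_def] at hij
              omega))
            hy1le
          · rw [habs]; exact ha1
          · intro i
            rw [habs]
            have := hy1le i
            linarith
          · intro i
            rw [habs]
            have h1 : y1 i ≤ x 0 := le_trans (hy1le i) hba
            have h2 : x 0 * y1 i ≤ x 0 * x 0 := mul_le_mul_of_nonneg_left h1 ha0
            nlinarith
        have h1 := hbr true
        have h2 := hbr false
        have he : (9/25 : ℝ) * 2 ^ (m+2) = (9/25) * 2 ^ (m+1) + (9/25) * 2 ^ (m+1) := by ring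
        rw [he]
        exact add_le_add h1 h2
      · -- CASE C : middle range, split the second coordinate
        have hsplit2 : ∀ b : Bool,
            Stmt19.cnt (m+1) (fun ρ => |sgn b * x 0 + Stmt19.Ssum y1 ρ| ≤ 1)
              = Stmt19.cnt m (fun ρ => |(sgn b * x 0 + sgn true * x 1) + Stmt19.Ssum z2 ρ| ≤ 1)
                + Stmt19.cnt m (fun ρ => |(sgn b * x 0 + sgn false * x 1) + Stmt19.Ssum z2 ρ| ≤ 1) := by
          intro b
          rw [Stmt19.cnt_split]
          congr 1
          · rw [Stmt19.cnt_cons_eq]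
            apply Stmt19.cnt_congr
            intro ρ
            have hy10 : y1 0 = x 1 := by simp [hy1def, Fin.succ_zero_eq_one]
            rw [hy10]
          · rw [Stmt19.cnt_cons_eq]
            apply Stmt19.cnt_congr
            intro ρ
            have hy10 : y1 0 = x 1 := by simp [hy1def, Fin.succ_zero_eq_one]
            rw [hy10]
        rw [hsplit2 true, hsplit2 false]
        -- the four shifts
        set s := x 0 + x 1 with hsdef
        set d := x 0 - x 1 with hddef
        set V := ∑ i : Fin m, (z2 i) ^ 2 with hVdef
        have hs0 : 0 ≤ s := by linarith
        have hd0 : 0 ≤ d := by linarith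
        have hs1 : s ≤ 1 := h12'
        -- identify the four terms
        have ett : sgn true * x 0 + sgn true * x 1 = s := by simp [sgn, hsdef]
        have etf : sgn true * x 0 + sgn false * x 1 = d := by simp [sgn, hddef]; ring
        have eft : sgn false * x 0 + sgn true * x 1 = -d := by simp [sgn, hddef]; ring
        have eff : sgn false * x 0 + sgn false * x 1 = -s := by simp [sgn, hsdef]; ring
        rw [ett, etf, eft, eff]
        have hshift : ∀ u : ℝ, 0 ≤ u →
            Stmt19.cnt m (fun ρ => |(-u) + Stmt19.Ssum z2 ρ| ≤ 1)
              = Stmt19.cnt m (fun ρ => |u + Stmt19.Ssum z2 ρ| ≤ 1) := by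
          intro u hu
          rw [Stmt19.cnt_shift_abs]
          apply Stmt19.cnt_congr
          intro ρ
          rw [abs_neg, abs_of_nonneg hu]
        rw [hshift d hd0, hshift s hs0]
        -- bound the s-terms with `term`, the d-terms with `W2`
        have hsterm : (1/2 - V / (2 * (1 + s) ^ 2)) * 2 ^ m
            ≤ Stmt19.cnt m (fun ρ => |s + Stmt19.Ssum z2 ρ| ≤ 1) := by
          rw [hVdef]
          exact Stmt19.term m z2 s 1 hs0 hs1 one_pos
        have hdterm : (1/2 - V / (2 * (2 - x 1) ^ 2)) * 2 ^ m
            ≤ Stmt19.cnt m (fun ρ => |d + Stmt19.Ssum z2 ρ| ≤ 1) := by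
          have hW2 := Stmt19.W2 1 (x 1) V one_pos hb0 (le_trans hba ha1) hz2nn
            m z2 d hz2nn' hz2le (le_of_eq hVdef.symm) (by rw [abs_of_nonneg hd0]; linarith)
          have he : 2 * 1 - x 1 = 2 - x 1 := by ring
          rw [he] at hW2
          exact hW2
        -- final algebra
        have hVeq : V = 1 - x 0 ^ 2 - x 1 ^ 2 := by
          linarith [hxs1, hxs2]
        have hkey : V / (2 * (1 + s) ^ 2) + V / (2 * (2 - x 1) ^ 2) ≤ 7/25 := by
          have hp1 : (0:ℝ) < 2 * (1 + s) ^ 2 := by positivity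
          have hp2 : (0:ℝ) < 2 * (2 - x 1) ^ 2 := by nlinarith [hba, ha1]
          have he : V / (2 * (1 + s) ^ 2) + V / (2 * (2 - x 1) ^ 2)
              = (V * (2 * (2 - x 1) ^ 2) + V * (2 * (1 + s) ^ 2))
                / ((2 * (1 + s) ^ 2) * (2 * (2 - x 1) ^ 2)) := by
            rw [div_add_div _ _ (ne_of_gt hp1) (ne_of_gt hp2)]
            try ring
          rw [he, div_le_iff₀ (by positivity)]
          rw [hVeq, hsdef]
          exact Stmt19.caseC_poly (x 0) (x 1) (le_of_lt hB) hba (le_of_lt hA) h12'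
        have h2m : (0:ℝ) ≤ 2 ^ m := by positivity
        have h36 : (36/25 : ℝ) ≤ (1/2 - V / (2 * (1 + s) ^ 2)) + (1/2 - V / (2 * (2 - x 1) ^ 2))
            + ((1/2 - V / (2 * (2 - x 1) ^ 2)) + (1/2 - V / (2 * (1 + s) ^ 2))) := by
          linarith only [hkey]
        have hfin : (9/25 : ℝ) * 2 ^ (m+2)
            ≤ (1/2 - V / (2 * (1 + s) ^ 2)) * 2 ^ m + (1/2 - V / (2 * (2 - x 1) ^ 2)) * 2 ^ m
              + ((1/2 - V / (2 * (2 - x 1) ^ 2)) * 2 ^ m + (1/2 - V / (2 * (1 + s) ^ 2)) * 2 ^ m) := by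
          have he : (9/25 : ℝ) * 2 ^ (m+2) = (36/25) * 2 ^ m := by ring
          rw [he]
          calc (36/25 : ℝ) * 2 ^ m
              ≤ ((1/2 - V / (2 * (1 + s) ^ 2)) + (1/2 - V / (2 * (2 - x 1) ^ 2))
                + ((1/2 - V / (2 * (2 - x 1) ^ 2)) + (1/2 - V / (2 * (1 + s) ^ 2)))) * 2 ^ m :=
                mul_le_mul_of_nonneg_right h36 h2m
            _ = (1/2 - V / (2 * (1 + s) ^ 2)) * 2 ^ m + (1/2 - V / (2 * (2 - x 1) ^ 2)) * 2 ^ m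
                + ((1/2 - V / (2 * (2 - x 1) ^ 2)) * 2 ^ m + (1/2 - V / (2 * (1 + s) ^ 2)) * 2 ^ m) := by
                ring
        calc (9/25 : ℝ) * 2 ^ (m+2) ≤ _ := hfin
          _ ≤ _ := by
            apply add_le_add
            · exact add_le_add hsterm hdterm
            · exact add_le_add hdterm hsterm
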